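/- If M is an S-R-bimodule which is J-coreduced as an S-module (JM = J^2M) for an ideal J of S, then for any R-module N, the S-module M ⊗_R N is J-coreduced. -/

import Mathlib

open TensorProduct

theorem stmt9 (R S : Type*) [CommRing R] [CommRing S] (J : Ideal S)
    (M : Type*) [AddCommGroup M] [Module R M] [Module S M]
    [SMulCommClass R S M] [SMulCommClass S R M]
    (N : Type*) [AddCommGroup N] [Module R N]
    (hM : J • (⊤ : Submodule S M) = (J ^ 2 : Ideal S) • (⊤ : Submodule S M)) :
    J • (⊤ : Submodule S (M ⊗[R] N)) =
      (J ^ 2 : Ideal S) • (⊤ : Submodule S (M ⊗[R] N)) := by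
  apply le_antisymm
  · rw [Submodule.smul_le]
    intro j hj x _
    induction x using TensorProduct.induction_on with
    | zero => simp only [smul_zero]; exact Submodule.zero_mem _
    | tmul m n =>
      have hm : j • m ∈ (J ^ 2 : Ideal S) • (⊤ : Submodule S M) := by
        rw [← hM]; exact Submodule.smul_mem_smul hj trivial
      let f : M →ₗ[S] M ⊗[R] N :=
        { toFun := fun m => m ⊗ₜ[R] n
          map_add' := fun a b => TensorProduct.add_tmul a b n
          map_smul' := fun s a => by simp [TensorProduct.smul_tmul'] }
      have : f (j • m) ∈ (J ^ 2 : Ideal S) • (⊤ : Submodule S (M ⊗[R] N)) := by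
        have := Submodule.map_smul'' (J ^ 2 : Ideal S) (⊤ : Submodule S M) f
        have hmem : f (j • m) ∈ Submodule.map f ((J ^ 2 : Ideal S) • ⊤) :=
          Submodule.mem_map_of_mem hm
        rw [this] at hmem
        exact (smul_mono_right _ le_top : _ ≤ (J ^ 2 : Ideal S) • (⊤ : Submodule S (M ⊗[R] N))) hmem
      rw [TensorProduct.smul_tmul']; exact this
    | add a b ha hb =>
      rw [smul_add]
      exact Submodule.add_mem _ (ha trivial) (hb trivial)
  · exact Submodule.smul_mono_left (Ideal.pow_le_self two_ne_zero)
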